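/- For each θ ∈ (0, π/2), the function f(λ) = cos(θ)·tanh(λ·cos(θ)) − sin(θ)·cot(λ·sin(θ)) has exactly one zero λ(θ) in the interval (0, π/(2·sin(θ))). -/

import Mathlib

open Real Set

theorem unique_zero_of_f {θ : ℝ} (h0 : 0 < θ) (h1 : θ < Real.pi / 2) :
    ∃! l : ℝ, l ∈ Set.Ioo 0 (Real.pi / (2 * Real.sin θ)) ∧
      Real.cos θ * Real.tanh (l * Real.cos θ)
        - Real.sin θ * (Real.cos (l * Real.sin θ) / Real.sin (l * Real.sin θ)) = 0 := by
  have hpi := Real.pi_pos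
  set s := Real.sin θ with hsdef
  set c := Real.cos θ with hcdef
  have hs : 0 < s := Real.sin_pos_of_pos_of_lt_pi h0 (by linarith)
  have hc : 0 < c := Real.cos_pos_of_mem_Ioo ⟨by linarith, h1⟩
  have hs1 : s ≤ 1 := Real.sin_le_one θ
  have hc1 : c ≤ 1 := Real.cos_le_one θ
  set B := Real.pi / (2 * s) with hBdef
  have hB : 0 < B := div_pos hpi (by linarith)
  have hBs : B * s = Real.pi / 2 := by
    rw [hBdef]; field_simp
  set g : ℝ → ℝ := fun l => c * Real.tanh (l * c)
      - s * (Real.cos (l * s) / Real.sin (l * s)) with hgdef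
  show ∃! l, l ∈ Set.Ioo 0 B ∧ g l = 0
  -- strict monotonicity of g on (0, B]
  have hmono : StrictMonoOn g (Set.Ioc 0 B) := by
    intro x hx y hy hxy
    have hxs : 0 < x * s := mul_pos hx.1 hs
    have hys2 : y * s ≤ Real.pi / 2 := by
      rw [← hBs]; exact mul_le_mul_of_nonneg_right hy.2 hs.le
    have hxy' : x * s < y * s := mul_lt_mul_of_pos_right hxy hs
    have hsinx : 0 < Real.sin (x * s) :=
      Real.sin_pos_of_pos_of_lt_pi hxs (by linarith)
    have hsiny : 0 < Real.sin (y * s) :=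
      Real.sin_pos_of_pos_of_lt_pi (hxs.trans hxy') (by linarith)
    have htanh : Real.tanh (x * c) < Real.tanh (y * c) := by
      rw [Real.tanh_eq_sinh_div_cosh, Real.tanh_eq_sinh_div_cosh,
        div_lt_div_iff₀ (Real.cosh_pos _) (Real.cosh_pos _)]
      have h : 0 < Real.sinh (y * c - x * c) :=
        Real.sinh_pos_iff.mpr (by nlinarith)
      rw [Real.sinh_sub] at h
      nlinarith
    have hcot : Real.cos (y * s) / Real.sin (y * s)
        < Real.cos (x * s) / Real.sin (x * s) := by
      rw [div_lt_div_iff₀ hsiny hsinx]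
      have h : 0 < Real.sin (y * s - x * s) :=
        Real.sin_pos_of_pos_of_lt_pi (by linarith) (by linarith)
      rw [Real.sin_sub] at h
      nlinarith
    have h1' := mul_lt_mul_of_pos_left htanh hc
    have h2' := mul_lt_mul_of_pos_left hcot hs
    simp only [hgdef]
    linarith
  -- choose A small
  set A := min (1/2 : ℝ) (B / 2) with hAdef
  have hA0 : 0 < A := lt_min (by norm_num) (by linarith)
  have hAB : A < B := (min_le_right _ _).trans_lt (by linarith)
  have hAhalf : A ≤ 1/2 := min_le_left _ _
  have hAs : A * s ≤ Real.pi / 4 := by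
    have : A * s ≤ (B / 2) * s := mul_le_mul_of_nonneg_right (min_le_right _ _) hs.le
    nlinarith
  have hAs0 : 0 < A * s := mul_pos hA0 hs
  have hsinA : 0 < Real.sin (A * s) :=
    Real.sin_pos_of_pos_of_lt_pi hAs0 (by linarith)
  -- g A < 0
  have hgA : g A < 0 := by
    have htanh1 : Real.tanh (A * c) < 1 := by
      rw [Real.tanh_eq_sinh_div_cosh, div_lt_one (Real.cosh_pos _)]
      exact Real.sinh_lt_cosh _
    have hcosA : (1:ℝ)/2 ≤ Real.cos (A * s) := by
      have h2 : Real.cos (Real.pi / 4) ≤ Real.cos (A * s) :=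
        Real.cos_le_cos_of_nonneg_of_le_pi hAs0.le (by linarith) hAs
      rw [Real.cos_pi_div_four] at h2
      nlinarith [Real.sq_sqrt (by norm_num : (2:ℝ) ≥ 0), Real.sqrt_nonneg 2,
        Real.sqrt_pos.mpr (by norm_num : (0:ℝ) < 2)]
    have hsinlt : Real.sin (A * s) < A * s := Real.sin_lt hAs0
    have h1' : s * (Real.cos (A * s) / Real.sin (A * s)) ≥ 1 := by
      rw [mul_div_assoc' , ge_iff_le, le_div_iff₀ hsinA, one_mul]
      nlinarith
    have h2' : c * Real.tanh (A * c) < 1 := by nlinarith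
    simp only [hgdef]
    linarith
  -- g B > 0
  have hgB : 0 < g B := by
    have : Real.cos (B * s) = 0 := by rw [hBs, Real.cos_pi_div_two]
    have htanh : 0 < Real.tanh (B * c) := by
      rw [Real.tanh_eq_sinh_div_cosh]
      exact div_pos (Real.sinh_pos_iff.mpr (mul_pos hB hc)) (Real.cosh_pos _)
    simp only [hgdef, this, zero_div, mul_zero, sub_zero]
    positivity
  -- continuity on [A, B]
  have hcont : ContinuousOn g (Set.Icc A B) := by
    apply ContinuousOn.sub
    · apply Continuous.continuousOn
      have : Continuous Real.tanh := by
        simp only [funext Real.tanh_eq_sinh_div_cosh]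
        exact Real.continuous_sinh.div Real.continuous_cosh fun x => (Real.cosh_pos x).ne'
      fun_prop
    · apply ContinuousOn.mul continuousOn_const
      apply ContinuousOn.div (by fun_prop) (by fun_prop)
      intro x hx
      have hx0 : 0 < x * s := mul_pos (hA0.trans_le hx.1) hs
      have hx2 : x * s ≤ Real.pi / 2 := by
        rw [← hBs]; exact mul_le_mul_of_nonneg_right hx.2 hs.le
      exact (Real.sin_pos_of_pos_of_lt_pi hx0 (by linarith)).ne'
  -- IVT
  obtain ⟨l, hl, hgl⟩ := intermediate_value_Ioo hAB.le hcont ⟨hgA, hgB⟩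
  have hlmem : l ∈ Set.Ioo 0 B := ⟨hA0.trans hl.1, hl.2⟩
  refine ⟨l, ⟨hlmem, hgl⟩, ?_⟩
  rintro y ⟨hy, hgy⟩
  exact hmono.injOn (Set.Ioo_subset_Ioc_self hy) (Set.Ioo_subset_Ioc_self hlmem)
    (by rw [hgy, hgl])
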